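/- If G is an r-regular graph with r odd, then the inverse signed total domination number equals the negative of the signed total domination number: γ⁰_st(G) = -γ_st(G). -/

import Mathlib

open SimpleGraph Finset

/-- If `G` is `r`-regular with `r` odd, then `γ⁰_st(G) = -γ_st(G)`. -/
theorem istdn_eq_neg_stdn_of_odd_regular {V : Type*} [Fintype V] [DecidableEq V]
    (G : SimpleGraph V) [DecidableRel G.Adj] (r : ℕ) (hr : Odd r)
    (hreg : G.IsRegularOfDegree r)
    (g s : ℤ)
    (hg : IsGreatest {w : ℤ | ∃ f : V → ℤ,
        (∀ v, f v = 1 ∨ f v = -1) ∧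
        (∀ v : V, ∑ u ∈ G.neighborFinset v, f u ≤ 0) ∧
        w = ∑ v, f v} g)
    (hs : IsLeast {w : ℤ | ∃ f : V → ℤ,
        (∀ v, f v = 1 ∨ f v = -1) ∧
        (∀ v : V, 1 ≤ ∑ u ∈ G.neighborFinset v, f u) ∧
        w = ∑ v, f v} s) :
    g = -s := by
  -- key parity fact: for any ±1 function, neighborhood sums are odd
  have key : ∀ f : V → ℤ, (∀ v, f v = 1 ∨ f v = -1) → ∀ v : V,
      Odd (∑ u ∈ G.neighborFinset v, f u) := by
    intro f hf v
    have hsum : ∑ u ∈ G.neighborFinset v, f u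
        = (∑ u ∈ G.neighborFinset v, (f u - 1)) + (r : ℤ) := by
      have hc : (G.neighborFinset v).card = r := by
        rw [SimpleGraph.card_neighborFinset_eq_degree]; exact hreg v
      rw [Finset.sum_sub_distrib, Finset.sum_const, hc]
      ring
    have heven : Even (∑ u ∈ G.neighborFinset v, (f u - 1)) := by
      apply Finset.even_sum
      intro u _
      rcases hf u with h | h
      · simp [h]
      · rw [h]; exact ⟨-1, by ring⟩
    rw [hsum]
    exact heven.add_odd (by exact_mod_cast hr)
  obtain ⟨⟨f, hf1, hf2, hf3⟩, hgub⟩ := hg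
  obtain ⟨⟨p, hp1, hp2, hp3⟩, hslb⟩ := hs
  -- -f is an STDF
  have h1 : s ≤ -g := by
    apply hslb
    refine ⟨fun v => -(f v), fun v => ?_, fun v => ?_, by simp [hf3]⟩
    · rcases hf1 v with h | h <;> simp [h]
    · have ho := key f hf1 v
      have hle := hf2 v
      have : ∑ u ∈ G.neighborFinset v, f u ≤ -1 := by
        obtain ⟨k, hk⟩ := ho
        omega
      calc (1 : ℤ) ≤ -(∑ u ∈ G.neighborFinset v, f u) := by linarith
        _ = ∑ u ∈ G.neighborFinset v, -(f u) := by rw [Finset.sum_neg_distrib]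
  -- -p is an ISTDF
  have h2 : -s ≤ g := by
    apply hgub
    refine ⟨fun v => -(p v), fun v => ?_, fun v => ?_, by simp [hp3]⟩
    · rcases hp1 v with h | h <;> simp [h]
    · have := hp2 v
      have : ∑ u ∈ G.neighborFinset v, -(p u) = -(∑ u ∈ G.neighborFinset v, p u) :=
        Finset.sum_neg_distrib p
      linarith
  omega
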